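/- Let f be a monic complex polynomial of degree n ≥ 2 with distinct roots λ_1, ..., λ_k, let z_{n-1} be the unique root of f^{(n-1)}, and let g = f' / gcd(f, f'). Then Σ_{j=1}^{k} λ_j equals the sum of the roots of g counted with multiplicity plus z_{n-1}. -/

import Mathlib

open Polynomial

private lemma rm_mono {a : ℂ} {p q : ℂ[X]} (hq : q ≠ 0) (h : p ∣ q) :
    rootMultiplicity a p ≤ rootMultiplicity a q :=
  (le_rootMultiplicity_iff hq).2 ((pow_rootMultiplicity_dvd p a).trans h)

theorem stmt15 (n : ℕ) (hn : 2 ≤ n) (f : Polynomial ℂ) (hf : f.Monic)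
    (hdeg : f.natDegree = n) (z : ℂ)
    (hz : (Polynomial.derivative^[n - 1] f).eval z = 0) :
    ∑ x ∈ f.roots.toFinset, x =
      ((Polynomial.derivative f / EuclideanDomain.gcd f (Polynomial.derivative f)).roots).sum
        + z := by
  classical
  have hf0 : f ≠ 0 := hf.ne_zero
  have hn0 : (n : ℂ) ≠ 0 := Nat.cast_ne_zero.2 (by omega)
  set c : ℂ := f.coeff (n - 1) with hc
  set d : ℂ[X] := EuclideanDomain.gcd f (Polynomial.derivative f) with hdd
  have hdf0 : Polynomial.derivative f ≠ 0 := by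
    intro h
    have := natDegree_eq_zero_of_derivative_eq_zero h
    omega
  have hd0 : d ≠ 0 := fun h => hf0 (EuclideanDomain.gcd_eq_zero_iff.1 h).1
  -- root multiplicities of gcd
  have hmult : ∀ a : ℂ, rootMultiplicity a d = rootMultiplicity a f - 1 := by
    intro a
    by_cases ha : f.IsRoot a
    · refine le_antisymm ?_ ?_
      · rw [← derivative_rootMultiplicity_of_root ha]
        exact rm_mono hdf0 (EuclideanDomain.gcd_dvd_right _ _)
      · rw [le_rootMultiplicity_iff hd0]
        refine EuclideanDomain.dvd_gcd ?_ ?_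
        · exact (pow_dvd_pow _ (Nat.sub_le _ _)).trans (pow_rootMultiplicity_dvd f a)
        · exact (le_rootMultiplicity_iff hdf0).1
            (rootMultiplicity_sub_one_le_derivative_rootMultiplicity f a)
    · rw [rootMultiplicity_eq_zero ha, Nat.zero_sub]
      have hle : rootMultiplicity a d ≤ rootMultiplicity a f :=
        rm_mono hf0 (EuclideanDomain.gcd_dvd_left _ _)
      rw [rootMultiplicity_eq_zero ha] at hle
      omega
  have hroots_d : d.roots = f.roots - f.roots.dedup := by
    ext a
    rw [count_roots, Multiset.count_sub, count_roots, Multiset.count_dedup, hmult a]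
    split_ifs with h
    · rfl
    · rw [rootMultiplicity_eq_zero fun hr => h ((mem_roots hf0).2 hr)]
  have h1 : d.roots.sum + f.roots.dedup.sum = f.roots.sum := by
    rw [← Multiset.sum_add, hroots_d, tsub_add_cancel_of_le (f.roots.dedup_le)]
  -- sum over distinct roots
  have hS : ∑ x ∈ f.roots.toFinset, x = f.roots.dedup.sum := by
    simp [Finset.sum, Multiset.toFinset_val]
  -- sum of roots of f
  have hT : f.roots.sum = -c := by
    have := (IsAlgClosed.splits f).nextCoeff_eq_neg_sum_roots_of_monic hf
    rw [nextCoeff_of_natDegree_pos (by omega), hdeg] at this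
    rw [hc, this, neg_neg]
  -- factor the derivative
  have hgmul : d * (Polynomial.derivative f / d) = Polynomial.derivative f :=
    EuclideanDomain.mul_div_cancel' hd0 (EuclideanDomain.gcd_dvd_right _ _)
  have h2 : d.roots.sum + (Polynomial.derivative f / d).roots.sum
      = (Polynomial.derivative f).roots.sum := by
    rw [← Multiset.sum_add, ← roots_mul (hgmul.symm ▸ hdf0), hgmul]
  -- leading and next coefficients of the derivative
  have hcd1 : (Polynomial.derivative f).coeff (n - 1) = n := by
    have := coeff_derivative f (n - 1)
    rw [show n - 1 + 1 = n by omega] at this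
    rw [this, ← hdeg, hf.coeff_natDegree, one_mul, hdeg]
    have : ((n - 1 : ℕ) : ℂ) = (n : ℂ) - 1 := by push_cast [Nat.cast_sub (by omega : 1 ≤ n)]; ring
    rw [this]; ring
  have hcd2 : (Polynomial.derivative f).coeff (n - 2) = c * (n - 1) := by
    have := coeff_derivative f (n - 2)
    rw [show n - 2 + 1 = n - 1 by omega] at this
    rw [this, ← hc]
    have : ((n - 2 : ℕ) : ℂ) = (n : ℂ) - 2 := by push_cast [Nat.cast_sub (by omega : 2 ≤ n)]; ring
    rw [this]; ring
  -- degree of derivative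
  have hdeg' : (Polynomial.derivative f).natDegree = n - 1 := by
    refine le_antisymm (by simpa [hdeg] using natDegree_derivative_le f) ?_
    exact le_natDegree_of_ne_zero (by rw [hcd1]; exact hn0)
  -- sum of roots of the derivative
  have hq' : (n : ℂ) * (Polynomial.derivative f).roots.sum = -(c * ((n : ℂ) - 1)) := by
    set q : ℂ[X] := C ((n : ℂ))⁻¹ * Polynomial.derivative f with hqdef
    have hqm : q.Monic := by
      unfold q
      rw [Monic, leadingCoeff_mul, leadingCoeff_C, leadingCoeff, hdeg', hcd1,
        inv_mul_cancel₀ hn0]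
    have hqd : q.natDegree = n - 1 := by
      rw [hqdef, natDegree_C_mul (inv_ne_zero hn0), hdeg']
    have this1 := (IsAlgClosed.splits q).nextCoeff_eq_neg_sum_roots_of_monic hqm
    rw [nextCoeff_of_natDegree_pos (by omega : 0 < q.natDegree), hqd,
      show n - 1 - 1 = n - 2 by omega, coeff_C_mul, hcd2,
      roots_C_mul _ (inv_ne_zero hn0)] at this1
    have := congrArg (fun x => (n : ℂ) * x) this1
    simp only [← mul_assoc, mul_inv_cancel₀ hn0, one_mul] at this
    linear_combination this
  -- the root of the (n-1)-st derivative
  have hzval : c + (n : ℂ) * z = 0 := by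
    have hFdeg : ((Polynomial.derivative)^[n - 1] f).natDegree < 2 := by
      have := natDegree_iterate_derivative f (n - 1)
      omega
    rw [eval_eq_sum_range' hFdeg, Finset.sum_range_succ, Finset.sum_range_one] at hz
    rw [coeff_iterate_derivative, coeff_iterate_derivative] at hz
    rw [show 0 + (n - 1) = n - 1 by omega, show 1 + (n - 1) = n by omega] at hz
    have hd1 : Nat.descFactorial n (n - 1) = Nat.factorial n := by
      have h := Nat.factorial_mul_descFactorial (show n - 1 ≤ n by omega)
      rw [show n - (n - 1) = 1 by omega, Nat.factorial_one, one_mul] at h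
      exact h
    have hd2 : Nat.descFactorial (n - 1) (n - 1) = Nat.factorial (n - 1) := Nat.descFactorial_self _
    have hcn : f.coeff n = 1 := by rw [← hdeg]; exact hf.coeff_natDegree
    rw [hd1, hd2, hcn, ← hc] at hz
    simp only [smul_eq_mul, nsmul_eq_mul, mul_one, pow_zero, pow_one] at hz

    have hfac : ((Nat.factorial n : ℕ) : ℂ) = (n : ℂ) * (Nat.factorial (n - 1) : ℕ) := by
      rw [show n = (n - 1) + 1 by omega, Nat.factorial_succ]
      push_cast [show n - 1 + 1 = n by omega]
      ring
    rw [hfac] at hz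
    have hfac0 : ((Nat.factorial (n - 1) : ℕ) : ℂ) ≠ 0 := Nat.cast_ne_zero.2 (Nat.factorial_ne_zero _)
    have hfe : ((Nat.factorial (n - 1) : ℕ) : ℂ) * (c + (n : ℂ) * z) = 0 := by
      linear_combination hz
    rcases mul_eq_zero.1 hfe with h | h
    · exact absurd h hfac0
    · exact h
  -- put everything together
  rw [hS]
  refine mul_left_cancel₀ hn0 ?_
  linear_combination (n : ℂ) * h1 - (n : ℂ) * h2 + (n : ℂ) * hT - hq' - hzval
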